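/- Let K be a number field, C an ideal class of 𝓞_K, and 𝔞₁ a nonzero integral ideal of 𝓞_K whose ideal class is C⁻¹. The map sending a nonzero element α ∈ 𝔞₁ to the unique ideal I of 𝓞_K with I · 𝔞₁ = α𝓞_K descends to a well-defined bijection from the set of orbits of the unit group 𝓞_K^× acting by multiplication on the nonzero elements of 𝔞₁ onto the set of nonzero integral ideals of 𝓞_K whose ideal class is C. -/

import Mathlib

open NumberField
open scoped nonZeroDivisors

/-- Let `K` be a number field, `C` an ideal class of `𝓞 K`, and `𝔞₁` a
nonzero integral ideal of class `C⁻¹`. The map sending a nonzero `α ∈ 𝔞₁` to the unique ideal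
`I` with `I * 𝔞₁ = (α)` descends to a bijection from the orbits of the unit group `(𝓞 K)ˣ`
acting on the nonzero elements of `𝔞₁` onto the set of nonzero integral ideals of class `C`. -/
theorem unit_orbits_equiv_ideals_of_class
    (K : Type*) [Field K] [NumberField K]
    (C : ClassGroup (𝓞 K)) (𝔞₁ : Ideal (𝓞 K)) (h₁ : 𝔞₁ ≠ 0)
    (hC : ClassGroup.mk0 ⟨𝔞₁, mem_nonZeroDivisors_of_ne_zero h₁⟩ = C⁻¹) :
    ∃ e : Quot (fun a b : {x : 𝓞 K // x ∈ 𝔞₁ ∧ x ≠ 0} =>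
        ∃ u : (𝓞 K)ˣ, (u : 𝓞 K) * a.1 = b.1) ≃
          {I : (Ideal (𝓞 K))⁰ // ClassGroup.mk0 I = C},
      ∀ a : {x : 𝓞 K // x ∈ 𝔞₁ ∧ x ≠ 0},
        ((e (Quot.mk _ a)).1 : Ideal (𝓞 K)) * 𝔞₁ = Ideal.span {a.1} := by
  classical
  have hdvd : ∀ a : {x : 𝓞 K // x ∈ 𝔞₁ ∧ x ≠ 0}, 𝔞₁ ∣ Ideal.span {a.1} := fun a =>
    (Ideal.dvd_iff_le).mpr (by simpa [Ideal.span_le] using a.2.1)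
  choose I hI using hdvd
  have hspan_ne : ∀ a : {x : 𝓞 K // x ∈ 𝔞₁ ∧ x ≠ 0}, Ideal.span {a.1} ≠ 0 := fun a => by
    simpa [Ideal.span_singleton_eq_bot] using a.2.2
  have hIne : ∀ a : {x : 𝓞 K // x ∈ 𝔞₁ ∧ x ≠ 0}, I a ≠ 0 := by
    intro a h
    exact hspan_ne a (by rw [hI a, h, mul_zero])
  have hImk : ∀ a : {x : 𝓞 K // x ∈ 𝔞₁ ∧ x ≠ 0},
      ClassGroup.mk0 ⟨I a, mem_nonZeroDivisors_of_ne_zero (hIne a)⟩ = C := by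
    intro a
    have hprin : (Ideal.span {a.1}).IsPrincipal := ⟨a.1, rfl⟩
    have h1 : ClassGroup.mk0 ⟨Ideal.span {a.1},
        mem_nonZeroDivisors_of_ne_zero (hspan_ne a)⟩ = 1 :=
      (ClassGroup.mk0_eq_one_iff _).mpr hprin
    have hmul : (⟨Ideal.span {a.1}, mem_nonZeroDivisors_of_ne_zero (hspan_ne a)⟩ :
        (Ideal (𝓞 K))⁰) =
        ⟨𝔞₁, mem_nonZeroDivisors_of_ne_zero h₁⟩ *
          ⟨I a, mem_nonZeroDivisors_of_ne_zero (hIne a)⟩ :=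
      Subtype.ext (hI a)
    rw [hmul, MonoidHom.map_mul, hC] at h1
    exact mul_left_cancel (h1.trans (inv_mul_cancel C).symm)
  have hspan_eq : ∀ a b : {x : 𝓞 K // x ∈ 𝔞₁ ∧ x ≠ 0},
      Ideal.span {a.1} = Ideal.span {b.1} → I a = I b := by
    intro a b h
    have : 𝔞₁ * I a = 𝔞₁ * I b := by rw [← hI a, ← hI b, h]
    exact mul_left_cancel₀ h₁ this
  have hconst : ∀ a b : {x : 𝓞 K // x ∈ 𝔞₁ ∧ x ≠ 0},
      (∃ u : (𝓞 K)ˣ, (u : 𝓞 K) * a.1 = b.1) →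
      (⟨⟨I a, mem_nonZeroDivisors_of_ne_zero (hIne a)⟩, hImk a⟩ :
          {J : (Ideal (𝓞 K))⁰ // ClassGroup.mk0 J = C}) =
        ⟨⟨I b, mem_nonZeroDivisors_of_ne_zero (hIne b)⟩, hImk b⟩ := by
    rintro a b ⟨u, hu⟩
    have hsp : Ideal.span {a.1} = Ideal.span ({b.1} : Set (𝓞 K)) :=
      Ideal.span_singleton_eq_span_singleton.mpr ⟨u, by rw [mul_comm]; exact hu⟩
    exact Subtype.ext (Subtype.ext (hspan_eq a b hsp))
  have hinj : Function.Injective (Quot.lift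
      (fun a => (⟨⟨I a, mem_nonZeroDivisors_of_ne_zero (hIne a)⟩, hImk a⟩ :
        {J : (Ideal (𝓞 K))⁰ // ClassGroup.mk0 J = C})) hconst) := by
    intro x y
    refine Quot.induction_on₂ x y ?_
    intro a b h
    have hIab : I a = I b := congrArg (fun z => ((z.1 : (Ideal (𝓞 K))⁰) : Ideal (𝓞 K))) h
    have hsp : Ideal.span {a.1} = Ideal.span ({b.1} : Set (𝓞 K)) := by
      rw [hI a, hI b, hIab]
    obtain ⟨u, hu⟩ := Ideal.span_singleton_eq_span_singleton.mp hsp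
    exact Quot.sound ⟨u, by rw [mul_comm]; exact hu⟩
  have hsurj : Function.Surjective (Quot.lift
      (fun a => (⟨⟨I a, mem_nonZeroDivisors_of_ne_zero (hIne a)⟩, hImk a⟩ :
        {J : (Ideal (𝓞 K))⁰ // ClassGroup.mk0 J = C})) hconst) := by
    rintro ⟨⟨J, hJ0⟩, hJC⟩
    have hJne : J ≠ 0 := nonZeroDivisors.ne_zero hJ0
    have hmk1 : ClassGroup.mk0 ((⟨J, hJ0⟩ : (Ideal (𝓞 K))⁰) *
        ⟨𝔞₁, mem_nonZeroDivisors_of_ne_zero h₁⟩) = 1 := by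
      rw [MonoidHom.map_mul, hJC, hC, mul_inv_cancel]
    have hprin : (J * 𝔞₁).IsPrincipal := (ClassGroup.mk0_eq_one_iff _).mp hmk1
    obtain ⟨α, hα⟩ := hprin
    have hαJ : J * 𝔞₁ = Ideal.span {α} := by simpa [Ideal.submodule_span_eq] using hα
    have hαne : α ≠ 0 := by
      intro h
      apply mul_ne_zero hJne h₁
      rw [hαJ, h]
      simp
    have hαmem : α ∈ 𝔞₁ := by
      have : α ∈ J * 𝔞₁ := by
        rw [hαJ]; exact Ideal.mem_span_singleton_self α
      exact Ideal.mul_le_right this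
    refine ⟨Quot.mk _ ⟨α, hαmem, hαne⟩, ?_⟩
    have hIJ : I ⟨α, hαmem, hαne⟩ = J := by
      apply mul_left_cancel₀ h₁
      rw [← hI ⟨α, hαmem, hαne⟩, mul_comm 𝔞₁ J, hαJ]
    exact Subtype.ext (Subtype.ext hIJ)
  refine ⟨Equiv.ofBijective _ ⟨hinj, hsurj⟩, ?_⟩
  intro a
  change I a * 𝔞₁ = Ideal.span {a.1}
  rw [mul_comm]
  exact (hI a).symm
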